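/- Let ξ : I_n → ℤ be the increasing height function ξ(i) = i + 2c. Then the inverse of the bijection φ_ξ : Î_n → R_n^+ × ℤ is given by φ_ξ^{−1}(α_{a,b}, 2k+1) = (b−a, ξ(b−a) + 2(kn + a)) and φ_ξ^{−1}(α_{a,b}, 2k+2) = (n+a−b, ξ(n+a−b) + 2(kn + b)), for 1 ≤ a < b ≤ n and k ∈ ℤ. -/

import Mathlib

/-- For the increasing height function `ξ(i) = i + 2c` on `I_n`, if
`φ : Î_n → R_n^+ × ℤ` satisfies the recursive characterization of the bijection `φ_ξ`
(positive roots `α_{a,b}` being encoded as pairs `(a,b)` with `1 ≤ a < b ≤ n`), then its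
inverse is given by `φ_ξ^{−1}(α_{a,b}, 2k+1) = (b−a, ξ(b−a) + 2(kn+a))` and
`φ_ξ^{−1}(α_{a,b}, 2k+2) = (n+a−b, ξ(n+a−b) + 2(kn+b))`. -/
theorem stmt9 (n c : ℤ) (hn : 1 < n) (ξ : ℤ → ℤ) (hξ : ∀ i, ξ i = i + 2 * c)
    (φ : ℤ × ℤ → (ℤ × ℤ) × ℤ)
    -- (1) the initial condition: for increasing ξ, `φ(i, ξ(i)) = (α_{i,n}, 0)`
    (h1 : ∀ i, 1 ≤ i → i ≤ n - 1 → φ (i, ξ i) = ((i, n), 0))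
    -- (2) the forward recursion via the Coxeter element `τ_ξ = s_1⋯s_{n−1}` (ε_i ↦ ε_{i+1}):
    (h2 : ∀ i p a b k, 1 ≤ i → i ≤ n - 1 → (2 : ℤ) ∣ (p - i) →
      1 ≤ a → a < b → b ≤ n → φ (i, p) = ((a, b), k) →
      φ (i, p + 2) = if b < n then ((a + 1, b + 1), k) else ((1, a + 1), k + 1))
    -- (2') the backward recursion via `τ_ξ^{-1}`:
    (h3 : ∀ i p a b k, 1 ≤ i → i ≤ n - 1 → (2 : ℤ) ∣ (p - i) →
      1 ≤ a → a < b → b ≤ n → φ (i, p) = ((a, b), k) →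
      φ (i, p - 2) = if 1 < a then ((a - 1, b - 1), k) else ((b - 1, n), k - 1)) :
    ∀ a b k : ℤ, 1 ≤ a → a < b → b ≤ n →
      φ (b - a, ξ (b - a) + 2 * (k * n + a)) = ((a, b), 2 * k + 1) ∧
      φ (n + a - b, ξ (n + a - b) + 2 * (k * n + b)) = ((a, b), 2 * k + 2) := by
  have hdvd : ∀ (i m : ℤ), (2:ℤ) ∣ (ξ i + 2 * m - i) := by
    intro i m; rw [hξ]; omega
  -- forward within-block lemma
  have hfwd : ∀ (q i : ℤ), 1 ≤ i → i ≤ n - 1 →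
      φ (i, ξ i + 2 * (q * n)) = ((i, n), 2 * q) →
      ∀ s : ℕ, (s : ℤ) ≤ n →
        φ (i, ξ i + 2 * (q * n + (s:ℤ))) =
          if (s:ℤ) = 0 then ((i, n), 2*q)
          else if (s:ℤ) + i ≤ n then (((s:ℤ), (s:ℤ) + i), 2*q+1)
          else (((s:ℤ) + i - n, (s:ℤ)), 2*q+2) := by
    intro q i hi1 hi2 hanchor s
    induction s with
    | zero => intro _; simpa using hanchor
    | succ t ih =>
      intro hs
      have hts : ((t+1 : ℕ) : ℤ) = (t:ℤ) + 1 := by push_cast; ring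
      rw [hts] at hs ⊢
      have ht : (t:ℤ) ≤ n := by omega
      have hφt := ih ht
      have hpt : ξ i + 2 * (q * n + ((t:ℤ)+1)) = (ξ i + 2 * (q * n + (t:ℤ))) + 2 := by ring
      rw [hpt]
      by_cases ht0 : (t:ℤ) = 0
      · rw [if_pos ht0] at hφt
        have key := h2 i _ i n (2*q) hi1 hi2 (hdvd i _) (by omega) (by omega) le_rfl hφt
        rw [if_neg (by omega)] at key
        rw [key]
        split_ifs <;> simp only [Prod.mk.injEq, eq_self_iff_true, and_true, true_and] <;> omega
      · rw [if_neg ht0] at hφt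
        by_cases hle : (t:ℤ) + i ≤ n
        · rw [if_pos hle] at hφt
          have key := h2 i _ (t:ℤ) ((t:ℤ)+i) (2*q+1) hi1 hi2 (hdvd i _)
            (by omega) (by omega) (by omega) hφt
          rw [key]
          split_ifs <;> simp only [Prod.mk.injEq, eq_self_iff_true, and_true, true_and] <;> omega
        · rw [if_neg hle] at hφt
          have key := h2 i _ ((t:ℤ)+i-n) (t:ℤ) (2*q+2) hi1 hi2 (hdvd i _)
            (by omega) (by omega) (by omega) hφt
          rw [key]
          split_ifs <;> simp only [Prod.mk.injEq, eq_self_iff_true, and_true, true_and] <;> omega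
  -- backward within-block lemma
  have hbwd : ∀ (q i : ℤ), 1 ≤ i → i ≤ n - 1 →
      φ (i, ξ i + 2 * (q * n)) = ((i, n), 2 * q) →
      ∀ s : ℕ, (s : ℤ) ≤ n →
        φ (i, ξ i + 2 * (q * n - (s:ℤ))) =
          if (s:ℤ) = n then ((i, n), 2*q - 2)
          else if i ≤ (s:ℤ) then ((n - s, n - s + i), 2*q - 1)
          else ((i - s, n - s), 2*q) := by
    intro q i hi1 hi2 hanchor s
    induction s with
    | zero =>
      intro _
      rw [if_neg (by push_cast; omega), if_neg (by push_cast; omega)]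
      simpa using hanchor
    | succ t ih =>
      intro hs
      have hts : ((t+1 : ℕ) : ℤ) = (t:ℤ) + 1 := by push_cast; ring
      rw [hts] at hs ⊢
      have ht : (t:ℤ) ≤ n := by omega
      have hφt := ih ht
      rw [if_neg (by omega)] at hφt
      have hpt : ξ i + 2 * (q * n - ((t:ℤ)+1)) = (ξ i + 2 * (q * n - (t:ℤ))) - 2 := by ring
      rw [hpt]
      by_cases hti : i ≤ (t:ℤ)
      · rw [if_pos hti] at hφt
        have key := h3 i _ (n - (t:ℤ)) (n - (t:ℤ) + i) (2*q-1) hi1 hi2 (hdvd i _)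
          (by omega) (by omega) (by omega) hφt
        rw [key]
        split_ifs <;> simp only [Prod.mk.injEq, eq_self_iff_true, and_true, true_and] <;> omega
      · rw [if_neg hti] at hφt
        have key := h3 i _ (i - (t:ℤ)) (n - (t:ℤ)) (2*q) hi1 hi2 (hdvd i _)
          (by omega) (by omega) (by omega) hφt
        rw [key]
        split_ifs <;> simp only [Prod.mk.injEq, eq_self_iff_true, and_true, true_and] <;> omega
  -- anchors for every block
  have hanchor : ∀ (q i : ℤ), 1 ≤ i → i ≤ n - 1 →
      φ (i, ξ i + 2 * (q * n)) = ((i, n), 2 * q) := by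
    intro q
    induction q using Int.induction_on with
    | zero =>
      intro i hi1 hi2
      have := h1 i hi1 hi2
      simpa using this
    | succ q ih =>
      intro i hi1 hi2
      have key := hfwd (q:ℤ) i hi1 hi2 (ih i hi1 hi2) n.toNat
        (by rw [Int.toNat_of_nonneg (by omega)])
      rw [Int.toNat_of_nonneg (by omega : (0:ℤ) ≤ n)] at key
      rw [if_neg (by omega), if_neg (by omega)] at key
      have hpe : ξ i + 2 * (((q:ℤ)+1) * n) = ξ i + 2 * ((q:ℤ) * n + n) := by ring
      rw [hpe, key]
      simp only [Prod.mk.injEq, eq_self_iff_true, and_true, true_and]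
      omega
    | pred q ih =>
      intro i hi1 hi2
      have key := hbwd (-(q:ℤ)) i hi1 hi2 (ih i hi1 hi2) n.toNat
        (by rw [Int.toNat_of_nonneg (by omega)])
      rw [Int.toNat_of_nonneg (by omega : (0:ℤ) ≤ n)] at key
      rw [if_pos rfl] at key
      have hpe : ξ i + 2 * ((-(q:ℤ) - 1) * n) = ξ i + 2 * ((-(q:ℤ)) * n - n) := by ring
      rw [hpe, key]
      simp only [Prod.mk.injEq, eq_self_iff_true, and_true, true_and]
      omega
  -- conclusion
  intro a b k ha hab hbn
  constructor
  · have hi1 : (1:ℤ) ≤ b - a := by omega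
    have hi2 : b - a ≤ n - 1 := by omega
    have key := hfwd k (b - a) hi1 hi2 (hanchor k (b - a) hi1 hi2) a.toNat
      (by rw [Int.toNat_of_nonneg (by omega)]; omega)
    rw [Int.toNat_of_nonneg (by omega : (0:ℤ) ≤ a)] at key
    rw [if_neg (by omega), if_pos (by omega)] at key
    rw [key]
    simp only [Prod.mk.injEq, eq_self_iff_true, and_true, true_and]
    omega
  · have hi1 : (1:ℤ) ≤ n + a - b := by omega
    have hi2 : n + a - b ≤ n - 1 := by omega
    have key := hfwd k (n + a - b) hi1 hi2 (hanchor k (n + a - b) hi1 hi2) b.toNat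
      (by rw [Int.toNat_of_nonneg (by omega)]; omega)
    rw [Int.toNat_of_nonneg (by omega : (0:ℤ) ≤ b)] at key
    rw [if_neg (by omega), if_neg (by omega)] at key
    rw [key]
    simp only [Prod.mk.injEq, eq_self_iff_true, and_true, true_and]
    omega
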